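/- Let G = (V,E) be a d-regular graph and xy ∈ E. Then the Lin-Lu-Yau curvature satisfies κ(x,y) = ((d+1)/d)·κ_{1/(d+1)}(x,y), where κ_p(x,y) = 1 − W₁(μ_x^p, μ_y^p). -/

import Mathlib

open Finset SimpleGraph

variable {V : Type*} [Fintype V] [DecidableEq V]

/-- A graph is amply regular with parameters `(n, d, a, b)` if it is `d`-regular on `n`
vertices, adjacent vertices have exactly `a` common neighbors, and vertices at distance 2
have exactly `b` common neighbors. -/
def SimpleGraph.IsAmplyRegular (G : SimpleGraph V) [DecidableRel G.Adj]
    (n d a b : ℕ) : Prop :=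
  Fintype.card V = n ∧ G.IsRegularOfDegree d ∧
    (∀ x y, G.Adj x y → (G.neighborFinset x ∩ G.neighborFinset y).card = a) ∧
    (∀ x y, G.dist x y = 2 → (G.neighborFinset x ∩ G.neighborFinset y).card = b)

/-- The measure `μ_x^p` giving mass `p` to `x` and `(1-p)/deg x` to each neighbor of `x`. -/
noncomputable def muMeasure (G : SimpleGraph V) [DecidableRel G.Adj] (p : ℝ) (x : V) :
    V → ℝ :=
  fun v => if v = x then p else if G.Adj x v then (1 - p) / (G.degree x : ℝ) else 0

/-- `pi` is a transport plan between `mu1` and `mu2`. -/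
def IsTransportPlan (mu1 mu2 : V → ℝ) (pi : V → V → ℝ) : Prop :=
  (∀ u v, 0 ≤ pi u v) ∧ (∀ u, ∑ v, pi u v = mu1 u) ∧ (∀ v, ∑ u, pi u v = mu2 v)

/-- The 1-Wasserstein distance between two measures w.r.t. the graph distance. -/
noncomputable def W1 (G : SimpleGraph V) (mu1 mu2 : V → ℝ) : ℝ :=
  sInf {c : ℝ | ∃ pi, IsTransportPlan mu1 mu2 pi ∧
    c = ∑ u, ∑ v, (G.dist u v : ℝ) * pi u v}

/-- The Lin-Lu-Yau curvature of an edge of a `d`-regular graph, via the idleness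
`p = 1/(d+1)` formula of Bourne et al. -/
noncomputable def kappaLLY (G : SimpleGraph V) [DecidableRel G.Adj] (d : ℕ) (x y : V) :
    ℝ :=
  ((d + 1 : ℝ) / d) *
    (1 - W1 G (muMeasure G (1 / (d + 1 : ℝ)) x) (muMeasure G (1 / (d + 1 : ℝ)) y))

/-- `N_x = Γ(x) \ ({y} ∪ Γ(y))`. -/
def Nset (G : SimpleGraph V) [DecidableRel G.Adj] (x y : V) : Finset V :=
  G.neighborFinset x \ insert y (G.neighborFinset y)

/-- `Δ_{xy} = Γ(x) ∩ Γ(y)`. -/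
def Dset (G : SimpleGraph V) [DecidableRel G.Adj] (x y : V) : Finset V :=
  G.neighborFinset x ∩ G.neighborFinset y

/-- `κ_p(x,y) = 1 - W₁(μ_x^p, μ_y^p)/d(x,y)`. -/
noncomputable def kappaP (G : SimpleGraph V) [DecidableRel G.Adj] (p : ℝ) (x y : V) :
    ℝ :=
  1 - W1 G (muMeasure G p x) (muMeasure G p y) / (G.dist x y : ℝ)


lemma tri {G : SimpleGraph V} {a b c : V} (h1 : G.Reachable a b) (h2 : G.Reachable b c) :
    G.dist a c ≤ G.dist a b + G.dist b c := by
  obtain ⟨p, hp⟩ := h1.exists_walk_length_eq_dist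
  obtain ⟨q, hq⟩ := h2.exists_walk_length_eq_dist
  calc G.dist a c ≤ (p.append q).length := SimpleGraph.dist_le _
    _ = _ := by rw [SimpleGraph.Walk.length_append, hp, hq]

set_option linter.unusedSectionVars false
set_option maxHeartbeats 800000


/-- difference of two Kronecker deltas -/
def dl [DecidableEq V] (a a' : V) : V → ℝ :=
  fun u => (if u = a then 1 else 0) - (if u = a' then 1 else 0)

noncomputable def tcost (G : SimpleGraph V) (π : V → V → ℝ) : ℝ :=
  ∑ u, ∑ v, (G.dist u v : ℝ) * π u v

noncomputable def swapP (π : V → V → ℝ) (ε : ℝ) (a a' b b' : V) : V → V → ℝ :=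
  fun u v => π u v + ε * (dl a a' u * dl b b' v)

lemma sum_dl (a a' : V) : ∑ u, dl a a' u = 0 := by
  simp [dl, Finset.sum_sub_distrib, Finset.sum_ite_eq']

lemma sum_dl_mul (a a' : V) (g : V → ℝ) : ∑ u, dl a a' u * g u = g a - g a' := by
  simp [dl, sub_mul, Finset.sum_sub_distrib, Finset.sum_ite_eq']

lemma swapP_row (π : V → V → ℝ) (ε : ℝ) (a a' b b' u : V) :
    ∑ v, swapP π ε a a' b b' u v = ∑ v, π u v := by
  unfold swapP
  rw [Finset.sum_add_distrib]
  have : ∑ v, ε * (dl a a' u * dl b b' v) = (ε * dl a a' u) * ∑ v, dl b b' v := by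
    rw [Finset.mul_sum]; exact Finset.sum_congr rfl fun v _ => by ring
  rw [this, sum_dl, mul_zero, add_zero]

lemma swapP_col (π : V → V → ℝ) (ε : ℝ) (a a' b b' v : V) :
    ∑ u, swapP π ε a a' b b' u v = ∑ u, π u v := by
  unfold swapP
  rw [Finset.sum_add_distrib]
  have : ∑ u, ε * (dl a a' u * dl b b' v) = (ε * dl b b' v) * ∑ u, dl a a' u := by
    rw [Finset.mul_sum]; exact Finset.sum_congr rfl fun u _ => by ring
  rw [this, sum_dl, mul_zero, add_zero]

lemma swapP_cost (G : SimpleGraph V) (π : V → V → ℝ) (ε : ℝ) (a a' b b' : V) :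
    tcost G (swapP π ε a a' b b') = tcost G π +
      ε * ((G.dist a b : ℝ) - G.dist a b' - ((G.dist a' b : ℝ) - G.dist a' b')) := by
  unfold tcost swapP
  have h1 : ∀ u, ∑ v, (G.dist u v : ℝ) * (π u v + ε * (dl a a' u * dl b b' v))
      = (∑ v, (G.dist u v : ℝ) * π u v) + (ε * dl a a' u) * ((G.dist u b : ℝ) - G.dist u b') := by
    intro u
    have e1 : ∀ v, (G.dist u v : ℝ) * (π u v + ε * (dl a a' u * dl b b' v))
        = (G.dist u v : ℝ) * π u v + (ε * dl a a' u) * (dl b b' v * (G.dist u v : ℝ)) := by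
      intro v; ring
    rw [Finset.sum_congr rfl fun v _ => e1 v, Finset.sum_add_distrib, ← Finset.mul_sum,
      sum_dl_mul]
  rw [Finset.sum_congr rfl fun u _ => h1 u, Finset.sum_add_distrib]
  congr 1
  have e2 : ∀ u, (ε * dl a a' u) * ((G.dist u b : ℝ) - G.dist u b')
      = ε * (dl a a' u * ((G.dist u b : ℝ) - G.dist u b')) := fun u => by ring
  rw [Finset.sum_congr rfl fun u _ => e2 u, ← Finset.mul_sum, sum_dl_mul]

lemma swapP_apply (π : V → V → ℝ) (ε : ℝ) (a a' b b' u v : V) :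
    swapP π ε a a' b b' u v = π u v + ε * (dl a a' u * dl b b' v) := rfl

lemma swapP_isPlan {μ1 μ2 : V → ℝ} {π : V → V → ℝ} (hπ : IsTransportPlan μ1 μ2 π)
    {a a' b b' : V} (haa' : a ≠ a') (hbb' : b ≠ b') {ε : ℝ} (hε0 : 0 ≤ ε)
    (h1 : ε ≤ π a b') (h2 : ε ≤ π a' b) :
    IsTransportPlan μ1 μ2 (swapP π ε a a' b b') := by
  obtain ⟨hpos, hrow, hcol⟩ := hπ
  refine ⟨?_, fun u => by rw [swapP_row]; exact hrow u, fun v => by rw [swapP_col]; exact hcol v⟩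
  intro u v
  rw [swapP_apply]
  unfold dl
  by_cases hua : u = a <;> by_cases hua' : u = a' <;>
    by_cases hvb : v = b <;> by_cases hvb' : v = b' <;>
    simp_all <;> linarith [hpos u v, hpos a b, hpos a' b', hpos a b', hpos a' b]

lemma tcost_nonneg (G : SimpleGraph V) {π : V → V → ℝ} (h : ∀ u v, 0 ≤ π u v) :
    0 ≤ tcost G π := by
  refine Finset.sum_nonneg fun u _ => Finset.sum_nonneg fun v _ => ?_
  exact mul_nonneg (by positivity) (h u v)

lemma tcost_continuous (G : SimpleGraph V) : Continuous (tcost G (V := V)) := by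
  refine continuous_finset_sum _ fun u _ => continuous_finset_sum _ fun v _ => ?_
  exact continuous_const.mul ((continuous_apply v).comp (continuous_apply u))

lemma plan_entry_le_row {μ1 μ2 : V → ℝ} {π : V → V → ℝ} (hπ : IsTransportPlan μ1 μ2 π)
    (u v : V) : π u v ≤ μ1 u := by
  rw [← hπ.2.1 u]
  exact Finset.single_le_sum (fun w _ => hπ.1 u w) (Finset.mem_univ v)

lemma plan_entry_le_col {μ1 μ2 : V → ℝ} {π : V → V → ℝ} (hπ : IsTransportPlan μ1 μ2 π)
    (u v : V) : π u v ≤ μ2 v := by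
  rw [← hπ.2.2 v]
  exact Finset.single_le_sum (fun w _ => hπ.1 w v) (Finset.mem_univ u)

lemma exists_opt (G : SimpleGraph V) (μ1 μ2 : V → ℝ) (F : (V → V → ℝ) → ℝ)
    (hF : Continuous F) (hne : ∃ π, IsTransportPlan μ1 μ2 π) (h1 : ∀ u, μ1 u ≤ 1) :
    ∃ π, IsTransportPlan μ1 μ2 π ∧ tcost G π = W1 G μ1 μ2 ∧
      (∀ π', IsTransportPlan μ1 μ2 π' → tcost G π ≤ tcost G π') ∧
      (∀ π', IsTransportPlan μ1 μ2 π' → tcost G π' = tcost G π → F π' ≤ F π) := by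
  set K : Set (V → V → ℝ) := {π | IsTransportPlan μ1 μ2 π} with hKdef
  have hKclosed : IsClosed K := by
    have : K = (⋂ (u) (v), {π : V → V → ℝ | 0 ≤ π u v}) ∩
        ((⋂ u, {π : V → V → ℝ | (∑ v, π u v) = μ1 u}) ∩
         (⋂ v, {π : V → V → ℝ | (∑ u, π u v) = μ2 v})) := by
      ext π
      simp only [hKdef, Set.mem_setOf_eq, Set.mem_inter_iff, Set.mem_iInter, IsTransportPlan]
    rw [this]
    refine IsClosed.inter ?_ (IsClosed.inter ?_ ?_)
    · exact isClosed_iInter fun u => isClosed_iInter fun v =>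
        isClosed_le continuous_const ((continuous_apply v).comp (continuous_apply u))
    · exact isClosed_iInter fun u => isClosed_eq
        (continuous_finset_sum _ fun v _ => (continuous_apply v).comp (continuous_apply u))
        continuous_const
    · exact isClosed_iInter fun v => isClosed_eq
        (continuous_finset_sum _ fun u _ => (continuous_apply v).comp (continuous_apply u))
        continuous_const
  have hKsub : K ⊆ Metric.closedBall 0 1 := by
    intro π hπ
    rw [Metric.mem_closedBall]
    rw [dist_pi_le_iff zero_le_one]
    intro u
    rw [dist_pi_le_iff zero_le_one]
    intro v
    have h0 : (0 : V → V → ℝ) u v = 0 := rfl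
    rw [Pi.zero_apply, Pi.zero_apply, Real.dist_eq, abs_le]
    constructor
    · linarith [hπ.1 u v]
    · linarith [plan_entry_le_row hπ u v, h1 u]
  have hKcomp : IsCompact K :=
    (isCompact_closedBall (0 : V → V → ℝ) 1).of_isClosed_subset hKclosed hKsub
  obtain ⟨π0, hπ0⟩ := hne
  obtain ⟨πm, hπmK, hπmin⟩ := hKcomp.exists_isMinOn ⟨π0, hπ0⟩ (tcost_continuous G).continuousOn
  have hmin : ∀ π', IsTransportPlan μ1 μ2 π' → tcost G πm ≤ tcost G π' :=
    fun π' hπ' => hπmin hπ'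
  -- second stage: maximize F on the argmin set
  set K' : Set (V → V → ℝ) := K ∩ {π | tcost G π = tcost G πm} with hK'def
  have hK'comp : IsCompact K' :=
    hKcomp.inter_right (isClosed_eq (tcost_continuous G) continuous_const)
  obtain ⟨πs, hπsK', hπsmax⟩ := hK'comp.exists_isMaxOn ⟨πm, hπmK, rfl⟩ hF.continuousOn
  obtain ⟨hπsK, hπscost⟩ := hπsK'
  have hcostW : tcost G πs = W1 G μ1 μ2 := by
    rw [hπscost]
    unfold W1
    have hset : {c : ℝ | ∃ pi, IsTransportPlan μ1 μ2 pi ∧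
        c = ∑ u, ∑ v, (G.dist u v : ℝ) * pi u v} = tcost G '' K := by
      ext c
      simp only [Set.mem_setOf_eq, Set.mem_image, hKdef, tcost]
      exact ⟨fun ⟨π, h, hc⟩ => ⟨π, h, hc.symm⟩, fun ⟨π, h, hc⟩ => ⟨π, h, hc.symm⟩⟩
    rw [hset]
    refine le_antisymm ?_ ?_
    · exact le_csInf ⟨tcost G πm, πm, hπmK, rfl⟩
        (fun c ⟨π', hπ', hc⟩ => hc ▸ hmin π' hπ')
    · exact csInf_le ⟨tcost G πm, fun c ⟨π', hπ', hc⟩ => hc ▸ hmin π' hπ'⟩ ⟨πm, hπmK, rfl⟩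
  refine ⟨πs, hπsK, hcostW, fun π' h => hπscost ▸ hmin π' h, fun π' h hc => ?_⟩
  exact hπsmax ⟨h, hc.trans hπscost⟩

section MuLemmas
variable {G : SimpleGraph V} [DecidableRel G.Adj] {d : ℕ}

lemma mu_self (p : ℝ) (x : V) : muMeasure G p x x = p := by simp [muMeasure]

lemma mu_adj (hreg : G.IsRegularOfDegree d) (p : ℝ) {x v : V} (h : G.Adj x v) :
    muMeasure G p x v = (1 - p) / d := by
  unfold muMeasure
  rw [if_neg (by rintro rfl; exact G.loopless.irrefl _ h), if_pos h, hreg x]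

lemma mu_not (p : ℝ) {x v : V} (hv : v ≠ x) (h : ¬ G.Adj x v) : muMeasure G p x v = 0 := by
  simp [muMeasure, hv, h]

lemma mu_nonneg {p : ℝ} (h0 : 0 ≤ p) (h1 : p ≤ 1) (x v : V) :
    0 ≤ muMeasure G p x v := by
  unfold muMeasure
  split_ifs with h h'
  · exact h0
  · exact div_nonneg (by linarith) (Nat.cast_nonneg _)
  · exact le_refl 0

lemma mu_le_one (hreg : G.IsRegularOfDegree d) (hd : 0 < d) {p : ℝ} (h0 : 0 ≤ p) (h1 : p ≤ 1)
    (x v : V) : muMeasure G p x v ≤ 1 := by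
  unfold muMeasure
  have hd1 : (1:ℝ) ≤ d := by exact_mod_cast hd
  split_ifs with h h'
  · exact h1
  · rw [hreg x]
    rw [div_le_one (by linarith)]
    linarith
  · linarith

lemma mu_sum (hreg : G.IsRegularOfDegree d) (hd : 0 < d) (p : ℝ) (x : V) :
    ∑ v, muMeasure G p x v = 1 := by
  have hdne : (d:ℝ) ≠ 0 := by positivity
  have hsplit : ∀ v, muMeasure G p x v =
      (if v = x then p else 0) + (if G.Adj x v then (1-p)/d else 0) := by
    intro v
    unfold muMeasure
    by_cases hv : v = x
    · subst hv; simp [G.loopless]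
    · simp only [if_neg hv, hreg x, zero_add]
  rw [Finset.sum_congr rfl fun v _ => hsplit v, Finset.sum_add_distrib]
  have h1 : ∑ v, (if v = x then p else 0) = p := by
    simp [Finset.sum_ite_eq']
  have h2 : ∑ v, (if G.Adj x v then (1-p)/(d:ℝ) else 0) = (1-p) := by
    rw [Finset.sum_ite, Finset.sum_const_zero, add_zero, Finset.sum_const, nsmul_eq_mul]
    have hc : (Finset.univ.filter fun v => G.Adj x v).card = d := by
      rw [← hreg x, SimpleGraph.degree, SimpleGraph.neighborFinset_eq_filter]
    rw [hc, mul_div_assoc']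
    field_simp
  rw [h1, h2]; ring
end MuLemmas

/-- The Dirac product plan. -/
def dd (x y : V) : V → V → ℝ := fun u v => (if u = x then 1 else 0) * (if v = y then 1 else 0)

lemma dd_row (x y u : V) : ∑ v, dd x y u v = if u = x then 1 else 0 := by
  unfold dd; rw [← Finset.mul_sum]; simp [Finset.sum_ite_eq']

lemma dd_col (x y v : V) : ∑ u, dd x y u v = if v = y then 1 else 0 := by
  unfold dd
  have : ∀ u, (if u = x then (1:ℝ) else 0) * (if v = y then 1 else 0)
      = (if v = y then (1:ℝ) else 0) * (if u = x then 1 else 0) := fun u => by ring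
  rw [Finset.sum_congr rfl fun u _ => this u, ← Finset.mul_sum]
  simp [Finset.sum_ite_eq']

lemma tcost_dd (G : SimpleGraph V) (x y : V) : tcost G (dd x y) = G.dist x y := by
  unfold tcost dd
  have h1 : ∀ u, ∑ v, (G.dist u v : ℝ) * ((if u = x then 1 else 0) * (if v = y then 1 else 0))
      = (if u = x then (1:ℝ) else 0) * (G.dist u y : ℝ) := by
    intro u
    have : ∀ v, (G.dist u v : ℝ) * ((if u = x then 1 else 0) * (if v = y then 1 else 0))
        = (if v = y then (1:ℝ) else 0) * ((if u = x then (1:ℝ) else 0) * (G.dist u v : ℝ)) :=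
      fun v => by ring
    rw [Finset.sum_congr rfl fun v _ => this v]
    simp [Finset.sum_ite_eq']
  rw [Finset.sum_congr rfl fun u _ => h1 u]
  simp [Finset.sum_ite_eq']

lemma tcost_comb (G : SimpleGraph V) (α β : ℝ) (π σ : V → V → ℝ) :
    tcost G (fun u v => α * π u v + β * σ u v) = α * tcost G π + β * tcost G σ := by
  unfold tcost
  rw [Finset.mul_sum, Finset.mul_sum, ← Finset.sum_add_distrib]
  refine Finset.sum_congr rfl fun u _ => ?_
  rw [Finset.mul_sum, Finset.mul_sum, ← Finset.sum_add_distrib]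
  exact Finset.sum_congr rfl fun v _ => by ring

lemma comb_plan {μ1 μ2 ν1 ν2 : V → ℝ} {π σ : V → V → ℝ} {α β : ℝ}
    (hπ : IsTransportPlan μ1 μ2 π) (hσ : IsTransportPlan ν1 ν2 σ)
    (hα : 0 ≤ α) (hβ : 0 ≤ β) :
    IsTransportPlan (fun u => α * μ1 u + β * ν1 u) (fun v => α * μ2 v + β * ν2 v)
      (fun u v => α * π u v + β * σ u v) := by
  refine ⟨fun u v => by have := hπ.1 u v; have := hσ.1 u v; dsimp only; positivity, fun u => ?_, fun v => ?_⟩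
  · rw [Finset.sum_add_distrib, ← Finset.mul_sum, ← Finset.mul_sum, hπ.2.1 u, hσ.2.1 u]
  · rw [Finset.sum_add_distrib, ← Finset.mul_sum, ← Finset.mul_sum, hπ.2.2 v, hσ.2.2 v]

lemma dd_plan (x y : V) :
    IsTransportPlan (fun u => if u = x then 1 else 0) (fun v => if v = y then 1 else 0)
      (dd x y) :=
  ⟨fun u v => by unfold dd; split_ifs <;> norm_num, dd_row x y, dd_col x y⟩

lemma prod_plan {μ1 μ2 : V → ℝ} (h1 : ∀ v, 0 ≤ μ1 v) (h2 : ∀ v, 0 ≤ μ2 v)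
    (s1 : ∑ v, μ1 v = 1) (s2 : ∑ v, μ2 v = 1) :
    IsTransportPlan μ1 μ2 (fun u v => μ1 u * μ2 v) := by
  refine ⟨fun u v => mul_nonneg (h1 u) (h2 v), fun u => ?_, fun v => ?_⟩
  · rw [← Finset.mul_sum, s2, mul_one]
  · have : ∀ u, μ1 u * μ2 v = μ2 v * μ1 u := fun u => by ring
    rw [Finset.sum_congr rfl fun u _ => this u, ← Finset.mul_sum, s1, mul_one]

section Surgery
variable {G : SimpleGraph V} [DecidableRel G.Adj] {d : ℕ} {x y : V}

lemma surgery (hreg : G.IsRegularOfDegree d) (hxy : G.Adj x y)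
    {p : ℝ} (hp0 : 1/((d:ℝ)+1) ≤ p) (hp1 : p < 1)
    {π : V → V → ℝ} (hπ : IsTransportPlan (muMeasure G p x) (muMeasure G p y) π)
    (hmin : ∀ π', IsTransportPlan (muMeasure G p x) (muMeasure G p y) π' →
      tcost G π ≤ tcost G π')
    (hmax : ∀ π', IsTransportPlan (muMeasure G p x) (muMeasure G p y) π' →
      tcost G π' = tcost G π → 2 * π' x y + ∑ w, π' w w ≤ 2 * π x y + ∑ w, π w w) :
    1 - (1-p)*((d:ℝ)+1)/d ≤ π x y := by
  by_contra hcon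
  push_neg at hcon
  -- basic numeric facts
  have hd : 0 < d := hreg x ▸ (G.degree_pos_iff_exists_adj x).mpr ⟨y, hxy⟩
  have hdR : (0:ℝ) < d := by exact_mod_cast hd
  have hne : x ≠ y := hxy.ne
  set q : ℝ := (1-p)/(d:ℝ) with hqdef
  set m : ℝ := 1 - (1-p)*((d:ℝ)+1)/d with hmdef
  have hqm : q + m = p := by
    rw [hqdef, hmdef]; field_simp; ring
  have hqpos : 0 ≤ q := by
    rw [hqdef]; apply div_nonneg (by linarith) hdR.le
  -- measure values
  have hμ2x : muMeasure G p y x = q := mu_adj hreg p hxy.symm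
  have hμ1y : muMeasure G p x y = q := mu_adj hreg p hxy
  have hπxx : π x x ≤ q := hμ2x ▸ plan_entry_le_col hπ x x
  have hπyy : π y y ≤ q := hμ1y ▸ plan_entry_le_row hπ y y
  -- support facts
  have supp1 : ∀ u v, 0 < π u v → u ≠ x → G.Adj x u := by
    intro u v h hux
    by_contra hadj
    have h0 : muMeasure G p x u = 0 := mu_not p hux hadj
    have := plan_entry_le_row hπ u v
    rw [h0] at this; linarith
  have supp2 : ∀ u v, 0 < π u v → v ≠ y → G.Adj y v := by
    intro u v h hvy
    by_contra hadj
    have h0 : muMeasure G p y v = 0 := mu_not p hvy hadj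
    have := plan_entry_le_col hπ u v
    rw [h0] at this; linarith
  -- step 1
  obtain ⟨v, hvx, hvy, hv⟩ : ∃ v, v ≠ x ∧ v ≠ y ∧ 0 < π x v := by
    by_contra h
    push_neg at h
    have hrow : ∑ v, π x v = p := by rw [hπ.2.1 x, mu_self]
    have hsub : ∑ v ∈ ({x,y} : Finset V), π x v = ∑ v, π x v := by
      refine Finset.sum_subset (Finset.subset_univ _) ?_
      intro w _ hw
      simp only [Finset.mem_insert, Finset.mem_singleton, not_or] at hw
      exact le_antisymm (h w hw.1 hw.2) (hπ.1 x w)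
    rw [Finset.sum_pair hne, hrow] at hsub
    linarith
  -- step 2
  obtain ⟨u, hux, huy, hu⟩ : ∃ u, u ≠ x ∧ u ≠ y ∧ 0 < π u y := by
    by_contra h
    push_neg at h
    have hcol : ∑ u, π u y = p := by rw [hπ.2.2 y, mu_self]
    have hsub : ∑ u ∈ ({x,y} : Finset V), π u y = ∑ u, π u y := by
      refine Finset.sum_subset (Finset.subset_univ _) ?_
      intro w _ hw
      simp only [Finset.mem_insert, Finset.mem_singleton, not_or] at hw
      exact le_antisymm (h w hw.1 hw.2) (hπ.1 w y)
    rw [Finset.sum_pair hne, hcol] at hsub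
    linarith
  -- distances around the edge
  have hdxy : G.dist x y = 1 := SimpleGraph.dist_eq_one_iff_adj.mpr hxy
  by_cases hA : ∃ w, w ≠ x ∧ w ≠ y ∧ 0 < π x w ∧ 0 < π w y
  · -- Case A : cheap swap through a common vertex
    obtain ⟨w, hwx, hwy, h1, h2⟩ := hA
    have haxw : G.Adj x w := supp1 w y h2 hwx
    have hayw : G.Adj y w := supp2 x w h1 hwy
    set ε := min (π x w) (π w y) with hεdef
    have hε : 0 < ε := lt_min h1 h2
    have hplan2 := swapP_isPlan hπ (Ne.symm hwx) (Ne.symm hwy) hε.le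
      (min_le_left _ _) (min_le_right _ _)
    have hcost := swapP_cost G π ε x w y w
    rw [hdxy, SimpleGraph.dist_eq_one_iff_adj.mpr haxw,
      SimpleGraph.dist_eq_one_iff_adj.mpr hayw.symm, SimpleGraph.dist_self] at hcost
    have := hmin _ hplan2
    rw [hcost] at this
    push_cast at this
    linarith
  · push_neg at hA
    have huv : u ≠ v := by
      intro h
      exact absurd (h ▸ hu) (by simpa using (hA v hvx hvy hv))
    have hadj_yv : G.Adj y v := supp2 x v hv hvy
    have hadj_xu : G.Adj x u := supp1 u y hu hux
    have hdyv : G.dist y v = 1 := SimpleGraph.dist_eq_one_iff_adj.mpr hadj_yv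
    have hdux : G.dist u x = 1 := SimpleGraph.dist_eq_one_iff_adj.mpr hadj_xu.symm
    have hrxv : G.Reachable x v := hxy.reachable.trans hadj_yv.reachable
    have hruy : G.Reachable u y := hadj_xu.symm.reachable.trans hxy.reachable
    have hxv1 : 1 ≤ G.dist x v := hrxv.pos_dist_of_ne (Ne.symm hvx)
    have huy1 : 1 ≤ G.dist u y := hruy.pos_dist_of_ne huy
    have t1 : G.dist u v ≤ 1 + G.dist x v := by
      have := tri hadj_xu.symm.reachable hrxv
      rwa [hdux] at this
    have t2 : G.dist u v ≤ G.dist u y + 1 := by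
      have := tri hruy hadj_yv.reachable
      rwa [hdyv] at this
    by_cases hB : 1 + G.dist u v ≤ G.dist x v + G.dist u y
    · -- Case B1 : the direct swap does not increase the cost
      set ε := min (π x v) (π u y) with hεdef
      have hε : 0 < ε := lt_min hv hu
      have hplan2 := swapP_isPlan hπ (Ne.symm hux) (Ne.symm hvy) hε.le
        (min_le_left _ _) (min_le_right _ _)
      have hcost := swapP_cost G π ε x u y v
      rw [hdxy] at hcost
      have hΔ : ((1:ℕ):ℝ) - G.dist x v - ((G.dist u y : ℝ) - G.dist u v) ≤ 0 := by
        have : ((1 + G.dist u v : ℕ) : ℝ) ≤ ((G.dist x v + G.dist u y : ℕ) : ℝ) :=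
          Nat.cast_le.mpr hB
        push_cast at this ⊢
        linarith
      have hc2 : tcost G (swapP π ε x u y v) ≤ tcost G π := by
        rw [hcost]
        nlinarith [mul_nonpos_of_nonneg_of_nonpos hε.le hΔ]
      have heq : tcost G (swapP π ε x u y v) = tcost G π := le_antisymm hc2 (hmin _ hplan2)
      have hFle := hmax _ hplan2 heq
      have hxyterm : swapP π ε x u y v x y = π x y + ε := by
        rw [swapP_apply]
        have e1 : dl x u x = 1 := by simp [dl, Ne.symm hux]
        have e2 : dl y v y = 1 := by simp [dl, Ne.symm hvy]
        rw [e1, e2]; ring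
      have hdiag : ∑ w, swapP π ε x u y v w w = ∑ w, π w w := by
        unfold swapP
        rw [Finset.sum_add_distrib, ← Finset.mul_sum, sum_dl_mul x u (dl y v)]
        have e1 : dl y v x = 0 := by simp [dl, hne, Ne.symm hvx]
        have e2 : dl y v u = 0 := by simp [dl, huy, huv]
        rw [e1, e2]; ring
      rw [hxyterm, hdiag] at hFle
      linarith
    · -- Case B2 : v is a common neighbour; use a second-order swap
      push_neg at hB
      have hduy1 : G.dist u y = 1 := by omega
      have hdxv1 : G.dist x v = 1 := by omega
      have hadj_xv : G.Adj x v := SimpleGraph.dist_eq_one_iff_adj.mp hdxv1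
      have hcolv : ∑ u', π u' v = q := by
        rw [hπ.2.2 v, mu_adj hreg p hadj_yv]
      have hrowv : ∑ v', π v v' = q := by
        rw [hπ.2.1 v, mu_adj hreg p hadj_xv]
      have hxvvv : π x v + π v v ≤ q := by
        have hsub : ∑ u' ∈ ({x,v} : Finset V), π u' v ≤ ∑ u', π u' v :=
          Finset.sum_le_sum_of_subset_of_nonneg (Finset.subset_univ _)
            (fun w _ _ => hπ.1 w v)
        rw [Finset.sum_pair (Ne.symm hvx), hcolv] at hsub
        exact hsub
      obtain ⟨v', hv'v, hv'⟩ : ∃ v', v' ≠ v ∧ 0 < π v v' := by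
        by_contra h
        push_neg at h
        have : ∑ v', π v v' = π v v :=
          Finset.sum_eq_single_of_mem v (Finset.mem_univ v)
            (fun w _ hw => le_antisymm (h w hw) (hπ.1 v w))
        rw [hrowv] at this
        linarith
      have hryv' : G.Reachable y v' := by
        by_cases h : v' = y
        · exact h ▸ Reachable.refl _
        · exact (supp2 v v' hv' h).reachable
      have hrvv' : G.Reachable v v' := hadj_yv.symm.reachable.trans hryv'
      have t3 : G.dist x v' ≤ 1 + G.dist v v' := by
        have := tri hadj_xv.reachable hrvv'
        rwa [hdxv1] at this
      set ε := min (π x v) (π v v') with hεdef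
      have hε : 0 < ε := lt_min hv hv'
      have hplan2 := swapP_isPlan hπ (Ne.symm hvx) hv'v hε.le
        (min_le_left _ _) (min_le_right _ _)
      have hcost := swapP_cost G π ε x v v' v
      rw [hdxv1, SimpleGraph.dist_self] at hcost
      have hΔ : (G.dist x v' : ℝ) - ((1:ℕ):ℝ) - ((G.dist v v' : ℝ) - (0:ℕ)) ≤ 0 := by
        have : ((G.dist x v' : ℕ) : ℝ) ≤ ((1 + G.dist v v' : ℕ) : ℝ) := Nat.cast_le.mpr t3
        push_cast at this ⊢
        linarith
      have hc2 : tcost G (swapP π ε x v v' v) ≤ tcost G π := by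
        rw [hcost]
        nlinarith [mul_nonpos_of_nonneg_of_nonpos hε.le hΔ]
      have heq : tcost G (swapP π ε x v v' v) = tcost G π := le_antisymm hc2 (hmin _ hplan2)
      have hFle := hmax _ hplan2 heq
      have hxyterm : π x y ≤ swapP π ε x v v' v x y := by
        rw [swapP_apply]
        have e1 : dl x v x = 1 := by simp [dl, Ne.symm hvx]
        have e2 : (0:ℝ) ≤ dl v' v y := by
          simp only [dl]
          rw [if_neg (Ne.symm hvy)]
          split_ifs <;> norm_num
        rw [e1, one_mul]
        nlinarith [mul_nonneg hε.le e2]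
      have hdiag : ∑ w, swapP π ε x v v' v w w = ∑ w, π w w + ε * (dl v' v x - dl v' v v) := by
        unfold swapP
        rw [Finset.sum_add_distrib, ← Finset.mul_sum, sum_dl_mul x v (dl v' v)]
      have e3 : dl v' v v = -1 := by simp [dl, Ne.symm hv'v]
      have e4 : (0:ℝ) ≤ dl v' v x := by
        simp only [dl]
        rw [if_neg (Ne.symm hvx)]
        split_ifs <;> norm_num
      rw [hdiag, e3] at hFle
      nlinarith
end Surgery

section Key
variable {G : SimpleGraph V} [DecidableRel G.Adj] {d : ℕ} {x y : V}

lemma key (hreg : G.IsRegularOfDegree d) (hxy : G.Adj x y)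
    {p : ℝ} (hp0 : 1/((d:ℝ)+1) ≤ p) (hp1 : p < 1) :
    W1 G (muMeasure G p x) (muMeasure G p y)
      = ((1-p)*((d:ℝ)+1)/d) *
          W1 G (muMeasure G (1/((d:ℝ)+1)) x) (muMeasure G (1/((d:ℝ)+1)) y)
        + (1 - (1-p)*((d:ℝ)+1)/d) := by
  have hd : 0 < d := hreg x ▸ (G.degree_pos_iff_exists_adj x).mpr ⟨y, hxy⟩
  have hdR : (0:ℝ) < d := by exact_mod_cast hd
  have hdne : (d:ℝ) ≠ 0 := ne_of_gt hdR
  have hpd1 : 1 ≤ p * ((d:ℝ)+1) := by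
    rw [div_le_iff₀ (by linarith : (0:ℝ) < (d:ℝ)+1)] at hp0
    linarith
  set p₀ : ℝ := 1/((d:ℝ)+1) with hp₀def
  have hp₀pos : 0 < p₀ := by rw [hp₀def]; positivity
  have hp₀le : p₀ ≤ 1 := by
    rw [hp₀def, div_le_one (by linarith)]; linarith
  have hppos : 0 ≤ p := le_trans hp₀pos.le hp0
  set lam : ℝ := (1-p)*((d:ℝ)+1)/d with hlamdef
  set m : ℝ := 1 - lam with hmdef
  have hlam0 : 0 < lam := by
    rw [hlamdef]; apply div_pos (by nlinarith) hdR
  have hlam1 : lam ≤ 1 := by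
    rw [hlamdef, div_le_one hdR]
    nlinarith
  have hm0 : 0 ≤ m := by rw [hmdef]; linarith
  have hdxy : G.dist x y = 1 := SimpleGraph.dist_eq_one_iff_adj.mpr hxy
  -- decompositions of the measures
  have mu_decomp : ∀ z : V, ∀ u, muMeasure G p z u
      = lam * muMeasure G p₀ z u + m * (if u = z then 1 else 0) := by
    intro z u
    by_cases hu : u = z
    · subst hu
      rw [mu_self, mu_self, if_pos rfl, hmdef, hlamdef, hp₀def]
      field_simp
      ring
    · by_cases ha : G.Adj z u
      · rw [mu_adj hreg p ha, mu_adj hreg p₀ ha, if_neg hu, hp₀def, hlamdef]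
        field_simp
        ring
      · rw [mu_not p hu ha, mu_not p₀ hu ha, if_neg hu]
        ring
  -- nonemptiness of the plan sets
  have hplanp : ∃ π, IsTransportPlan (muMeasure G p x) (muMeasure G p y) π :=
    ⟨_, prod_plan (mu_nonneg hppos hp1.le x) (mu_nonneg hppos hp1.le y)
      (mu_sum hreg hd p x) (mu_sum hreg hd p y)⟩
  have hplanp₀ : ∃ π, IsTransportPlan (muMeasure G p₀ x) (muMeasure G p₀ y) π :=
    ⟨_, prod_plan (mu_nonneg hp₀pos.le hp₀le x) (mu_nonneg hp₀pos.le hp₀le y)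
      (mu_sum hreg hd p₀ x) (mu_sum hreg hd p₀ y)⟩
  -- optimal plans
  obtain ⟨π₀, hπ₀, hc₀, hmin₀, -⟩ := exists_opt G (muMeasure G p₀ x) (muMeasure G p₀ y)
    (fun _ => (0:ℝ)) continuous_const hplanp₀ (mu_le_one hreg hd hp₀pos.le hp₀le x)
  obtain ⟨πs, hπs, hcs, hmins, hmaxs⟩ := exists_opt G (muMeasure G p x) (muMeasure G p y)
    (fun π => 2 * π x y + ∑ w, π w w)
    (by
      apply Continuous.add
      · exact continuous_const.mul ((continuous_apply y).comp (continuous_apply x))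
      · exact continuous_finset_sum _ fun w _ => (continuous_apply w).comp (continuous_apply w))
    hplanp (mu_le_one hreg hd hppos hp1.le x)
  have hkey : m ≤ πs x y := by
    rw [hmdef, hlamdef]
    exact surgery hreg hxy hp0 hp1 hπs hmins (fun π' h hc => hmaxs π' h hc)
  -- upper bound : W1p ≤ lam * W1p₀ + m
  have hub : W1 G (muMeasure G p x) (muMeasure G p y)
      ≤ lam * W1 G (muMeasure G p₀ x) (muMeasure G p₀ y) + m := by
    have hplanc := comb_plan hπ₀ (dd_plan x y) hlam0.le hm0
    have hμx : (fun u => lam * muMeasure G p₀ x u + m * (if u = x then 1 else 0))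
        = muMeasure G p x := funext fun u => (mu_decomp x u).symm
    have hμy : (fun v => lam * muMeasure G p₀ y v + m * (if v = y then 1 else 0))
        = muMeasure G p y := funext fun v => (mu_decomp y v).symm
    rw [hμx, hμy] at hplanc
    have hcostc := tcost_comb G lam m π₀ (dd x y)
    rw [tcost_dd, hdxy, Nat.cast_one, mul_one] at hcostc
    calc W1 G (muMeasure G p x) (muMeasure G p y) = tcost G πs := hcs.symm
      _ ≤ tcost G (fun u v => lam * π₀ u v + m * dd x y u v) := hmins _ hplanc
      _ = lam * tcost G π₀ + m := hcostc
      _ = lam * W1 G (muMeasure G p₀ x) (muMeasure G p₀ y) + m := by rw [hc₀]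
  -- lower bound
  have hlb : lam * W1 G (muMeasure G p₀ x) (muMeasure G p₀ y) + m
      ≤ W1 G (muMeasure G p x) (muMeasure G p y) := by
    set πr : V → V → ℝ := fun u v => (πs u v - m * dd x y u v) / lam with hπrdef
    have hπr_eq : πr = fun u v => (1/lam) * πs u v + (-(m/lam)) * dd x y u v := by
      funext u v
      rw [hπrdef]
      field_simp
      ring
    have hplanr : IsTransportPlan (muMeasure G p₀ x) (muMeasure G p₀ y) πr := by
      refine ⟨?_, ?_, ?_⟩
      · intro u v
        rw [hπrdef]
        apply div_nonneg _ hlam0.le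
        by_cases hu : u = x
        · by_cases hv : v = y
          · rw [hu, hv]
            have hone : dd x y x y = 1 := by simp [dd]
            rw [hone, mul_one]
            linarith [hkey]
          · have : dd x y u v = 0 := by simp [dd, hv]
            rw [this, mul_zero, sub_zero]
            exact hπs.1 u v
        · have : dd x y u v = 0 := by simp [dd, hu]
          rw [this, mul_zero, sub_zero]
          exact hπs.1 u v
      · intro u
        have : ∑ v, πr u v = ((∑ v, πs u v) - m * ∑ v, dd x y u v) / lam := by
          rw [hπrdef, ← Finset.sum_div, Finset.sum_sub_distrib, ← Finset.mul_sum]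
        rw [this, hπs.2.1 u, dd_row, mu_decomp x u]
        field_simp
        ring
      · intro v
        have : ∑ u, πr u v = ((∑ u, πs u v) - m * ∑ u, dd x y u v) / lam := by
          rw [hπrdef, ← Finset.sum_div, Finset.sum_sub_distrib, ← Finset.mul_sum]
        rw [this, hπs.2.2 v, dd_col, mu_decomp y v]
        field_simp
        ring
    have hcostr : tcost G πr = (tcost G πs - m) / lam := by
      rw [hπr_eq, tcost_comb, tcost_dd, hdxy, Nat.cast_one]
      field_simp
      ring
    have h1 : W1 G (muMeasure G p₀ x) (muMeasure G p₀ y) ≤ (tcost G πs - m) / lam := by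
      rw [← hc₀, ← hcostr]
      exact hmin₀ _ hplanr
    rw [hcs] at h1
    rw [le_div_iff₀ hlam0] at h1
    nlinarith [h1]
  linarith [hub, hlb]

end Key

/-- The Lin-Lu-Yau curvature `κ(x,y) = lim_{p→1} κ_p(x,y)/(1-p)` of an edge of a
`d`-regular graph equals `((d+1)/d)·κ_{1/(d+1)}(x,y)`. -/
theorem stmt18 (G : SimpleGraph V) [DecidableRel G.Adj] {d : ℕ}
    (hreg : G.IsRegularOfDegree d) (x y : V) (hxy : G.Adj x y) :
    Filter.Tendsto (fun p => kappaP G p x y / (1 - p))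
      (nhdsWithin 1 (Set.Iio 1))
      (nhds (((d + 1 : ℝ) / d) * kappaP G (1 / (d + 1 : ℝ)) x y)) := by
  have hd : 0 < d := hreg x ▸ (G.degree_pos_iff_exists_adj x).mpr ⟨y, hxy⟩
  have hdR : (0:ℝ) < d := by exact_mod_cast hd
  have hdne : (d:ℝ) ≠ 0 := ne_of_gt hdR
  have hp₀1 : 1/((d:ℝ)+1) < 1 := by
    rw [div_lt_one (by linarith)]; linarith
  have hdist : G.dist x y = 1 := SimpleGraph.dist_eq_one_iff_adj.mpr hxy
  have hconst : ∀ p : ℝ, 1/((d:ℝ)+1) < p → p < 1 →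
      kappaP G p x y / (1 - p) = ((d + 1 : ℝ) / d) * kappaP G (1 / (d + 1 : ℝ)) x y := by
    intro p hp₀ hp1
    have hk := key hreg hxy hp₀.le hp1
    unfold kappaP
    rw [hdist, Nat.cast_one, div_one, div_one, hk]
    have h1p : (1:ℝ) - p ≠ 0 := by linarith
    field_simp
    ring
  have hev : (fun p : ℝ => ((d + 1 : ℝ) / d) * kappaP G (1 / (d + 1 : ℝ)) x y)
      =ᶠ[nhdsWithin 1 (Set.Iio 1)] fun p => kappaP G p x y / (1 - p) := by
    have h1 : ∀ᶠ p : ℝ in nhdsWithin 1 (Set.Iio 1), p ∈ Set.Iio (1:ℝ) :=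
      eventually_mem_nhdsWithin
    have h2 : ∀ᶠ p : ℝ in nhdsWithin 1 (Set.Iio 1), 1/((d:ℝ)+1) < p :=
      eventually_nhdsWithin_of_eventually_nhds (eventually_gt_nhds hp₀1)
    filter_upwards [h1, h2] with p hp1 hp2
    exact (hconst p hp2 hp1).symm
  exact Filter.Tendsto.congr' hev tendsto_const_nhds
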